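/- Let C and D be categories and F : C → D a functor. If C has the weak amalgamation property and F is cofinal and weakly absorbing, then D has the weak amalgamation property. -/
import Mathlib


open CategoryTheory

universe v₁ v₂ u₁ u₂

/-- A morphism `i : A₀ ⟶ A` is amalgamable if every two morphisms out of `A`
can be equalized after precomposition with `i`. -/
def IsAmalgamable {C : Type u₁} [Category.{v₁} C] {A₀ A : C} (i : A₀ ⟶ A) : Prop :=
  ∀ ⦃B X : C⦄ (α₁ : A ⟶ B) (α₂ : A ⟶ X),
    ∃ (W : C) (β₁ : B ⟶ W) (β₂ : X ⟶ W), i ≫ α₁ ≫ β₁ = i ≫ α₂ ≫ β₂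

/-- The weak amalgamation property: every object admits an amalgamable morphism
out of it. -/
def HasWAP (C : Type u₁) [Category.{v₁} C] : Prop :=
  ∀ A₀ : C, ∃ (A : C) (i : A₀ ⟶ A), IsAmalgamable i

/-- A functor `F : C ⥤ D` is cofinal if every `D`-object admits a morphism into
some `F(X)`. -/
def Cofinal {C : Type u₁} [Category.{v₁} C] {D : Type u₂} [Category.{v₂} D]
    (F : C ⥤ D) : Prop :=
  ∀ Y : D, ∃ X : C, Nonempty (Y ⟶ F.obj X)

/-- A functor `F : C ⥤ D` is weakly absorbing if for every `C`-object `X` there is a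
`D`-morphism `e : F(X) ⟶ Z` such that every `D`-morphism `f : Z ⟶ Y` can be absorbed:
there are `f' : X ⟶ Y'` in `C` and `g : Y ⟶ F(Y')` with `F(f') = e ≫ f ≫ g`. -/
def WeaklyAbsorbing {C : Type u₁} [Category.{v₁} C] {D : Type u₂} [Category.{v₂} D]
    (F : C ⥤ D) : Prop :=
  ∀ X : C, ∃ (Z : D) (e : F.obj X ⟶ Z),
    ∀ (Y : D) (f : Z ⟶ Y),
      ∃ (Y' : C) (f' : X ⟶ Y') (g : Y ⟶ F.obj Y'), F.map f' = e ≫ f ≫ g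

/-- If `C` has the weak amalgamation property and `F : C ⥤ D` is cofinal and weakly
absorbing, then `D` has the weak amalgamation property. -/
theorem stmt2 {C : Type u₁} [Category.{v₁} C] {D : Type u₂} [Category.{v₂} D]
    (F : C ⥤ D) (hC : HasWAP C) (hcof : Cofinal F) (habs : WeaklyAbsorbing F) :
    HasWAP D := by
  intro A₀
  obtain ⟨X₀, ⟨u⟩⟩ := hcof A₀
  obtain ⟨X, i, hi⟩ := hC X₀
  obtain ⟨Z, e, he⟩ := habs X
  refine ⟨Z, u ≫ F.map i ≫ e, ?_⟩
  intro B B' α₁ α₂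
  obtain ⟨Y₁, f₁, g₁, h₁⟩ := he B α₁
  obtain ⟨Y₂, f₂, g₂, h₂⟩ := he B' α₂
  obtain ⟨W, β₁, β₂, hβ⟩ := hi f₁ f₂
  refine ⟨F.obj W, g₁ ≫ F.map β₁, g₂ ≫ F.map β₂, ?_⟩
  have e1 : (u ≫ F.map i ≫ e) ≫ α₁ ≫ g₁ ≫ F.map β₁
      = u ≫ F.map (i ≫ f₁ ≫ β₁) := by
    simp only [Functor.map_comp, Category.assoc, h₁]
  have e2 : (u ≫ F.map i ≫ e) ≫ α₂ ≫ g₂ ≫ F.map β₂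
      = u ≫ F.map (i ≫ f₂ ≫ β₂) := by
    simp only [Functor.map_comp, Category.assoc, h₂]
  rw [e1, e2, hβ]
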